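/- Let (X, F, μ) be a measure space, n ≥ 1, and let t : X → ℝ^n be measurable (carrier term k ≡ 0). For θ ∈ ℝ^n set Z(θ) := ∫ exp(⟨θ, t(x)⟩) dμ(x), F(θ) := log Z(θ), p_θ(x) := exp(⟨θ, t(x)⟩ - F(θ)). Suppose θ₁, θ₂ ∈ ℝ^n are such that Z(θ₁), Z(θ₂), Z(2θ₁), Z(2θ₂), Z(θ₁+θ₂) all lie in (0,∞). Then ρ(p_{θ₁}, p_{θ₂}) = exp(-J_F(2θ₁, 2θ₂)) and the Cauchy–Schwarz divergence satisfies D_CS(p_{θ₁}, p_{θ₂}) = J_F(2θ₁, 2θ₂), where J_F(θ, θ') := (F(θ)+F(θ'))/2 - F((θ+θ')/2). -/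

import Mathlib

open MeasureTheory
open scoped ENNReal

/-- Partition function of an exponential family with sufficient statistic `t` and no
carrier term. -/
noncomputable def expFamZ₀ {X : Type*} [MeasurableSpace X] (μ : Measure X) {n : ℕ}
    (t : X → Fin n → ℝ) (θ : Fin n → ℝ) : ℝ≥0∞ :=
  ∫⁻ x, ENNReal.ofReal (Real.exp (∑ i, θ i * t x i)) ∂μ

/-- Cumulant function (log-normalizer) of the exponential family with no carrier
term. -/
noncomputable def expFamF₀ {X : Type*} [MeasurableSpace X] (μ : Measure X) {n : ℕ}
    (t : X → Fin n → ℝ) (θ : Fin n → ℝ) : ℝ :=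
  Real.log (expFamZ₀ μ t θ).toReal

/-- Density of the exponential family with no carrier term. -/
noncomputable def expFamPdf₀ {X : Type*} [MeasurableSpace X] (μ : Measure X) {n : ℕ}
    (t : X → Fin n → ℝ) (θ : Fin n → ℝ) (x : X) : ℝ :=
  Real.exp ((∑ i, θ i * t x i) - expFamF₀ μ t θ)

/-- Jensen divergence of the cumulant function. -/
noncomputable def jensenF₀ {X : Type*} [MeasurableSpace X] (μ : Measure X) {n : ℕ}
    (t : X → Fin n → ℝ) (θ θ' : Fin n → ℝ) : ℝ :=
  (expFamF₀ μ t θ + expFamF₀ μ t θ') / 2 - expFamF₀ μ t (((1 : ℝ) / 2) • (θ + θ'))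

lemma integral_exp_eq_toReal {X : Type*} [MeasurableSpace X] (μ : Measure X) {n : ℕ}
    (t : X → Fin n → ℝ) (ht : Measurable t) (η : Fin n → ℝ) :
    ∫ x, Real.exp (∑ i, η i * t x i) ∂μ = (expFamZ₀ μ t η).toReal := by
  rw [integral_eq_lintegral_of_nonneg_ae (ae_of_all _ fun x => (Real.exp_pos _).le)]
  · rfl
  · exact (Real.measurable_exp.comp
      (Finset.measurable_sum _ fun i _ =>
        measurable_const.mul ((measurable_pi_apply i).comp ht))).aestronglyMeasurable

lemma integral_exp_sub_const {X : Type*} [MeasurableSpace X] (μ : Measure X) {n : ℕ}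
    (t : X → Fin n → ℝ) (ht : Measurable t) (η : Fin n → ℝ) (c : ℝ) :
    ∫ x, Real.exp ((∑ i, η i * t x i) - c) ∂μ
      = (expFamZ₀ μ t η).toReal * Real.exp (-c) := by
  simp_rw [sub_eq_add_neg, Real.exp_add]
  rw [integral_mul_const, integral_exp_eq_toReal μ t ht η]

/-- With no carrier term, Onicescu's correlation coefficient is `exp (-J_F(2θ₁,2θ₂))`
and the Cauchy–Schwarz divergence is the Jensen divergence `J_F(2θ₁,2θ₂)`. -/
theorem onicescuCorrelation_cauchySchwarz_expFam_noCarrier {X : Type*}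
    [MeasurableSpace X] (μ : Measure X) {n : ℕ} (hn : 1 ≤ n)
    (t : X → Fin n → ℝ) (ht : Measurable t) (θ₁ θ₂ : Fin n → ℝ)
    (hZ1 : 0 < expFamZ₀ μ t θ₁) (hZ1' : expFamZ₀ μ t θ₁ < ⊤)
    (hZ2 : 0 < expFamZ₀ μ t θ₂) (hZ2' : expFamZ₀ μ t θ₂ < ⊤)
    (hZ11 : 0 < expFamZ₀ μ t ((2 : ℝ) • θ₁)) (hZ11' : expFamZ₀ μ t ((2 : ℝ) • θ₁) < ⊤)
    (hZ22 : 0 < expFamZ₀ μ t ((2 : ℝ) • θ₂)) (hZ22' : expFamZ₀ μ t ((2 : ℝ) • θ₂) < ⊤)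
    (hZ12 : 0 < expFamZ₀ μ t (θ₁ + θ₂)) (hZ12' : expFamZ₀ μ t (θ₁ + θ₂) < ⊤) :
    (∫ x, expFamPdf₀ μ t θ₁ x * expFamPdf₀ μ t θ₂ x ∂μ) /
        Real.sqrt ((∫ x, (expFamPdf₀ μ t θ₁ x) ^ 2 ∂μ) *
          (∫ x, (expFamPdf₀ μ t θ₂ x) ^ 2 ∂μ))
      = Real.exp (-(jensenF₀ μ t ((2 : ℝ) • θ₁) ((2 : ℝ) • θ₂))) ∧
    -Real.log ((∫ x, expFamPdf₀ μ t θ₁ x * expFamPdf₀ μ t θ₂ x ∂μ) /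
        Real.sqrt ((∫ x, (expFamPdf₀ μ t θ₁ x) ^ 2 ∂μ) *
          (∫ x, (expFamPdf₀ μ t θ₂ x) ^ 2 ∂μ)))
      = jensenF₀ μ t ((2 : ℝ) • θ₁) ((2 : ℝ) • θ₂) := by
  set F1 := expFamF₀ μ t θ₁ with hF1
  set F2 := expFamF₀ μ t θ₂ with hF2
  set z11 := (expFamZ₀ μ t ((2 : ℝ) • θ₁)).toReal with hz11
  set z22 := (expFamZ₀ μ t ((2 : ℝ) • θ₂)).toReal with hz22
  set z12 := (expFamZ₀ μ t (θ₁ + θ₂)).toReal with hz12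
  have hz11p : 0 < z11 := ENNReal.toReal_pos hZ11.ne' hZ11'.ne
  have hz22p : 0 < z22 := ENNReal.toReal_pos hZ22.ne' hZ22'.ne
  have hz12p : 0 < z12 := ENNReal.toReal_pos hZ12.ne' hZ12'.ne
  -- integrals
  have h12 : (∫ x, expFamPdf₀ μ t θ₁ x * expFamPdf₀ μ t θ₂ x ∂μ)
      = z12 * Real.exp (-(F1 + F2)) := by
    have : ∀ x, expFamPdf₀ μ t θ₁ x * expFamPdf₀ μ t θ₂ x
        = Real.exp ((∑ i, (θ₁ + θ₂) i * t x i) - (F1 + F2)) := by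
      intro x
      simp only [expFamPdf₀, ← Real.exp_add, Pi.add_apply, add_mul,
        Finset.sum_add_distrib]
      rw [hF1, hF2]
      ring_nf
    simp_rw [this]
    exact integral_exp_sub_const μ t ht _ _
  have h11 : (∫ x, (expFamPdf₀ μ t θ₁ x) ^ 2 ∂μ)
      = z11 * Real.exp (-(2 * F1)) := by
    have : ∀ x, (expFamPdf₀ μ t θ₁ x) ^ 2
        = Real.exp ((∑ i, ((2 : ℝ) • θ₁) i * t x i) - 2 * F1) := by
      intro x
      simp only [expFamPdf₀, sq, ← Real.exp_add, Pi.smul_apply, smul_eq_mul]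
      congr 1
      simp only [mul_assoc, ← Finset.mul_sum]
      ring
    simp_rw [this]
    exact integral_exp_sub_const μ t ht _ _
  have h22 : (∫ x, (expFamPdf₀ μ t θ₂ x) ^ 2 ∂μ)
      = z22 * Real.exp (-(2 * F2)) := by
    have : ∀ x, (expFamPdf₀ μ t θ₂ x) ^ 2
        = Real.exp ((∑ i, ((2 : ℝ) • θ₂) i * t x i) - 2 * F2) := by
      intro x
      simp only [expFamPdf₀, sq, ← Real.exp_add, Pi.smul_apply, smul_eq_mul]
      congr 1
      simp only [mul_assoc, ← Finset.mul_sum]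
      ring
    simp_rw [this]
    exact integral_exp_sub_const μ t ht _ _
  -- the argument simplification
  have harg : ((1 : ℝ) / 2) • ((2 : ℝ) • θ₁ + (2 : ℝ) • θ₂) = θ₁ + θ₂ := by
    ext i; simp [Pi.smul_apply, smul_eq_mul]; ring
  have hJ : jensenF₀ μ t ((2 : ℝ) • θ₁) ((2 : ℝ) • θ₂)
      = (Real.log z11 + Real.log z22) / 2 - Real.log z12 := by
    simp [jensenF₀, expFamF₀, harg, hz11, hz22, hz12]
  -- ρ computation
  have hsqrt : Real.sqrt ((z11 * Real.exp (-(2 * F1))) * (z22 * Real.exp (-(2 * F2))))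
      = Real.sqrt (z11 * z22) * Real.exp (-(F1 + F2)) := by
    have he : Real.exp (-(2 * F1)) * Real.exp (-(2 * F2))
        = Real.exp (-(F1 + F2)) ^ 2 := by
      rw [← Real.exp_add, sq, ← Real.exp_add]
      ring_nf
    have : (z11 * Real.exp (-(2 * F1))) * (z22 * Real.exp (-(2 * F2)))
        = (z11 * z22) * Real.exp (-(F1 + F2)) ^ 2 := by
      calc (z11 * Real.exp (-(2 * F1))) * (z22 * Real.exp (-(2 * F2)))
          = (z11 * z22) * (Real.exp (-(2 * F1)) * Real.exp (-(2 * F2))) := by ring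
        _ = (z11 * z22) * Real.exp (-(F1 + F2)) ^ 2 := by rw [he]
    rw [this, Real.sqrt_mul (by positivity), Real.sqrt_sq (Real.exp_pos _).le]
  have hrho : (∫ x, expFamPdf₀ μ t θ₁ x * expFamPdf₀ μ t θ₂ x ∂μ) /
        Real.sqrt ((∫ x, (expFamPdf₀ μ t θ₁ x) ^ 2 ∂μ) *
          (∫ x, (expFamPdf₀ μ t θ₂ x) ^ 2 ∂μ))
      = z12 / Real.sqrt (z11 * z22) := by
    rw [h12, h11, h22, hsqrt, mul_div_mul_right _ _ (Real.exp_pos _).ne']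
  have hsqrt2 : Real.sqrt (z11 * z22)
      = Real.exp ((Real.log z11 + Real.log z22) / 2) := by
    rw [Real.sqrt_eq_rpow, Real.rpow_def_of_pos (by positivity),
      Real.log_mul hz11p.ne' hz22p.ne']
    ring_nf
  have hmain : z12 / Real.sqrt (z11 * z22)
      = Real.exp (-(jensenF₀ μ t ((2 : ℝ) • θ₁) ((2 : ℝ) • θ₂))) := by
    rw [hJ, hsqrt2, ← Real.exp_log hz12p, ← Real.exp_sub]
    congr 1
    rw [Real.log_exp]
    ring
  refine ⟨hrho.trans hmain, ?_⟩
  rw [hrho, hmain, Real.log_exp, neg_neg]
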